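/- arXiv:1510.01590 — 2 statements merged into one kernel-verified Lean document; each statement's English description precedes it below -/
import Mathlib

section
/- Let f : (ℂⁿ, 0) → (ℂ, 0) be a holomorphic germ of multiplicity m with lowest-degree homogeneous Taylor part f_m (homogeneous of degree m). If ‖z‖^m = o(‖∇f(z)‖) as z → 0, then ‖z‖^m = o(‖∇f_m(z)‖) as z → 0; in particular ∇f_m(z) = 0 only for z = 0, so f_m has an isolated singularity at the origin. -/
set_option maxHeartbeats 1000000
set_option synthInstance.maxHeartbeats 400000

open Filter Topology Asymptotics

/-- The partial derivative `∂f/∂zᵢ` of `f : ℂⁿ → ℂ` at the point `z`. -/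
noncomputable def pderivAt {n : ℕ} (f : (Fin n → ℂ) → ℂ) (i : Fin n) (z : Fin n → ℂ) : ℂ :=
  fderiv ℂ f z (Pi.single i 1)

/-- The gradient `∇f = (∂f/∂z₁, …, ∂f/∂zₙ)` of `f` at `z`. -/
noncomputable def gradAt {n : ℕ} (f : (Fin n → ℂ) → ℂ) (z : Fin n → ℂ) : Fin n → ℂ :=
  fun i => pderivAt f i z

/-- `f` is a germ `(ℂⁿ, 0) → (ℂ, 0)` with an isolated singularity at the origin:
`f(0) = 0`, the origin is a critical point of `f`, and it is an isolated point of the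
critical set `{z : ∇f(z) = 0}`. -/
def HasIsolatedSingularityAtZero {n : ℕ} (f : (Fin n → ℂ) → ℂ) : Prop :=
  f 0 = 0 ∧ gradAt f 0 = 0 ∧ ∀ᶠ z in 𝓝[≠] (0 : Fin n → ℂ), gradAt f z ≠ 0

/-- `m` is the multiplicity of `f` at `0`, i.e. the lowest degree occurring in the Taylor
expansion of `f` at the origin; equivalently (for `f` analytic at `0`), `f = O(‖z‖^m)`
but not `f = o(‖z‖^m)` as `z → 0`. -/
def HasMultiplicity {n : ℕ} (f : (Fin n → ℂ) → ℂ) (m : ℕ) : Prop :=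
  f =O[𝓝 (0 : Fin n → ℂ)] (fun z => ‖z‖ ^ m) ∧ ¬ f =o[𝓝 (0 : Fin n → ℂ)] (fun z => ‖z‖ ^ m)

/-! ### Auxiliary lemmas -/

/-- The candidate differential of the polynomial map `z ↦ eval z φ`. -/
noncomputable def polyD {n : ℕ} (φ : MvPolynomial (Fin n) ℂ) (z : Fin n → ℂ) :
    (Fin n → ℂ) →L[ℂ] ℂ :=
  ∑ i, MvPolynomial.eval z (MvPolynomial.pderiv i φ) • ContinuousLinearMap.proj i

lemma polyD_apply {n : ℕ} (φ : MvPolynomial (Fin n) ℂ) (z v : Fin n → ℂ) :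
    polyD φ z v = ∑ i, MvPolynomial.eval z (MvPolynomial.pderiv i φ) * v i := by
  simp [polyD, ContinuousLinearMap.sum_apply, smul_eq_mul]

open MvPolynomial in
lemma hasFDerivAt_eval {n : ℕ} (φ : MvPolynomial (Fin n) ℂ) (z : Fin n → ℂ) :
    HasFDerivAt (fun w => MvPolynomial.eval w φ) (polyD φ z) z := by
  induction φ using MvPolynomial.induction_on with
  | C a =>
      have h0 : polyD (C a : MvPolynomial (Fin n) ℂ) z = 0 := by
        ext v; simp [polyD_apply, pderiv_C]
      rw [h0]
      simpa using (hasFDerivAt_const a z)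
  | add p q hp hq =>
      have h0 : polyD (p + q) z = polyD p z + polyD q z := by
        ext v
        simp [polyD_apply, map_add, add_mul, Finset.sum_add_distrib]
      rw [h0]
      exact (hp.add hq).congr_of_eventuallyEq (by filter_upwards with w; simp)
  | mul_X p i hp =>
      have hXi := hasFDerivAt_apply (𝕜 := ℂ) i z
      have h := hp.mul hXi
      have hfun : (fun w : Fin n → ℂ => MvPolynomial.eval w (p * X i)) =
          fun w => MvPolynomial.eval w p * w i := by funext w; simp
      rw [hfun]
      have hD : polyD (p * X i) z =
          MvPolynomial.eval z p • ContinuousLinearMap.proj i + z i • polyD p z := by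
        ext v
        simp only [polyD_apply, ContinuousLinearMap.add_apply, ContinuousLinearMap.smul_apply,
          ContinuousLinearMap.proj_apply, smul_eq_mul, pderiv_mul, map_add, map_mul, eval_X,
          pderiv_X, add_mul]
        rw [Finset.sum_add_distrib, Finset.mul_sum]
        nth_rewrite 2 [add_comm]
        congr 1
        · exact Finset.sum_congr rfl fun j _ => by ring
        · rw [Finset.sum_eq_single i]
          · simp
          · intro j _ hj
            simp [Pi.single_apply, Ne.symm hj]
          · simp
      rw [hD]
      exact h

lemma polyD_single {n : ℕ} (φ : MvPolynomial (Fin n) ℂ) (z : Fin n → ℂ) (i : Fin n) :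
    polyD φ z (Pi.single i 1) = MvPolynomial.eval z (MvPolynomial.pderiv i φ) := by
  rw [polyD_apply, Finset.sum_eq_single i]
  · simp
  · intro j _ hj
    simp [Pi.single_apply, Ne.symm hj]
  · simp

lemma eval_smul_hom {n : ℕ} {d : ℕ} {φ : MvPolynomial (Fin n) ℂ} (hφ : φ.IsHomogeneous d)
    (c : ℂ) (z : Fin n → ℂ) :
    MvPolynomial.eval (c • z) φ = c ^ d * MvPolynomial.eval z φ := by
  rw [MvPolynomial.eval_eq, MvPolynomial.eval_eq, Finset.mul_sum]
  refine Finset.sum_congr rfl fun u hu => ?_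
  have hdu : u.degree = d := by
    by_contra hne
    exact (MvPolynomial.mem_support_iff.mp hu) (hφ.coeff_eq_zero hne)
  have : ∏ i ∈ u.support, (c • z) i ^ u i = c ^ d * ∏ i ∈ u.support, z i ^ u i := by
    have : ∏ i ∈ u.support, (c • z) i ^ u i
        = ∏ i ∈ u.support, (c ^ u i * z i ^ u i) := by
      refine Finset.prod_congr rfl fun i _ => ?_
      simp [Pi.smul_apply, smul_eq_mul, mul_pow]
    rw [this, Finset.prod_mul_distrib, Finset.prod_pow_eq_pow_sum]
    congr 1
    rw [← hdu]
    rfl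
  rw [this]
  ring

lemma isHomogeneous_pderiv {n : ℕ} {d : ℕ} {φ : MvPolynomial (Fin n) ℂ}
    (hφ : φ.IsHomogeneous (d + 1)) (i : Fin n) :
    (MvPolynomial.pderiv i φ).IsHomogeneous d := by
  have hrepr : φ = ∑ u ∈ φ.support, MvPolynomial.monomial u (MvPolynomial.coeff u φ) :=
    (MvPolynomial.support_sum_monomial_coeff φ).symm
  rw [hrepr, map_sum]
  apply MvPolynomial.IsHomogeneous.sum
  intro u hu
  rw [MvPolynomial.pderiv_monomial]
  by_cases hui : u i = 0
  · rw [hui]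
    norm_num
    exact MvPolynomial.isHomogeneous_zero _ _ _
  · have hdu : u.degree = d + 1 := by
      by_contra hne
      exact (MvPolynomial.mem_support_iff.mp hu) (hφ.coeff_eq_zero hne)
    apply MvPolynomial.isHomogeneous_monomial
    have hsum : (u - Finsupp.single i 1) + Finsupp.single i 1 = u := by
      ext j
      simp only [Finsupp.add_apply, Finsupp.tsub_apply, Finsupp.single_apply]
      rcases eq_or_ne i j with rfl | hij
      · simp only [if_pos]
        omega
      · simp [hij]
    have hdeg := congrArg Finsupp.degree hsum
    have hadd : ∀ a b : Fin n →₀ ℕ, (a + b).degree = a.degree + b.degree := by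
      intro a b
      simp only [Finsupp.degree_eq_weight_one]
      exact map_add _ _ _
    have h1 : (Finsupp.single i 1 : Fin n →₀ ℕ).degree = 1 := by
      exact Finsupp.degree_single i 1
    rw [hadd, h1, hdu] at hdeg
    omega

lemma pow_isBigO_pow_of_le {E : Type*} [NormedAddCommGroup E] {k m : ℕ} (hkm : k ≤ m) :
    (fun z : E => ‖z‖ ^ m) =O[𝓝 (0 : E)] fun z => ‖z‖ ^ k := by
  apply IsBigO.of_bound 1
  have : ∀ᶠ z : E in 𝓝 0, ‖z‖ < 1 := by
    have := Metric.ball_mem_nhds (0 : E) one_pos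
    filter_upwards [this] with z hz
    simpa [dist_eq_norm] using hz
  filter_upwards [this] with z hz
  have h0 : (0:ℝ) ≤ ‖z‖ := norm_nonneg z
  simp only [norm_pow, norm_norm, one_mul]
  exact pow_le_pow_of_le_one h0 hz.le hkm

lemma fderiv_isBigO_of_isBigO_pow {n m : ℕ} {g : (Fin n → ℂ) → ℂ}
    (hg : AnalyticAt ℂ g 0) (h : g =O[𝓝 (0 : Fin n → ℂ)] fun z => ‖z‖ ^ (m + 1)) :
    (fun z => fderiv ℂ g z) =O[𝓝 (0 : Fin n → ℂ)] fun z => ‖z‖ ^ m := by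
  obtain ⟨p, hp⟩ := hg
  -- diagonal coefficients of degree ≤ m vanish
  have hdiag : ∀ k, k ≤ m → ∀ y, (p k fun _ => y) = 0 := by
    intro k
    induction k using Nat.strong_induction_on with
    | _ k ih =>
      intro hk y
      have psum_eq : p.partialSum (k + 1) = fun y => p k fun _ => y := by
        funext w
        refine Finset.sum_eq_single _ (fun b hb hnb => ?_) fun hn => ?_
        · have hb' := Finset.mem_range_succ_iff.mp hb
          rw [ih b (hb'.lt_of_ne hnb) (le_trans hb' hk) w]
        · exact absurd (Finset.mem_range.mpr (lt_add_one k)) hn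
      have h1 := hp.isBigO_sub_partialSum_pow (k + 1)
      rw [psum_eq] at h1
      simp only [zero_add] at h1
      have h2 : g =O[𝓝 (0 : Fin n → ℂ)] fun z => ‖z‖ ^ (k + 1) :=
        h.trans (pow_isBigO_pow_of_le (by omega))
      have h3 : (fun y => p k fun _ => y) =O[𝓝 (0 : Fin n → ℂ)] fun y => ‖y‖ ^ (k + 1) := by
        have := h2.sub h1
        simpa using this
      exact h3.continuousMultilinearMap_apply_eq_zero y
  obtain ⟨r, hr⟩ := hp
  classical
  set q : FormalMultilinearSeries ℂ (Fin n → ℂ) ℂ := fun k => if k ≤ m then 0 else p k with hqdef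
  have hqr : r ≤ q.radius := by
    refine le_trans hr.r_le (ENNReal.le_of_forall_nnreal_lt fun ρ hρ => ?_)
    obtain ⟨C, -, hC⟩ := p.norm_mul_pow_le_of_lt_radius hρ
    refine q.le_radius_of_bound C fun k => ?_
    refine le_trans ?_ (hC k)
    have hqk : ‖q k‖ ≤ ‖p k‖ := by
      by_cases hk : k ≤ m <;> simp [hqdef, hk, norm_nonneg]
    exact mul_le_mul_of_nonneg_right hqk (by positivity)
  have hq : HasFPowerSeriesOnBall g q 0 r := by
    refine ⟨hqr, hr.r_pos, fun {y} hy => ?_⟩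
    have hfun : (fun k => q k fun _ => y) = fun k => p k fun _ => y := by
      funext k
      by_cases hk : k ≤ m
      · simp [hqdef, hk, (hdiag k hk y).symm]
      · simp [hqdef, hk]
    rw [hfun]
    exact hr.hasSum hy
  have hd := hq.fderiv
  have h4 := hd.hasFPowerSeriesAt.isBigO_sub_partialSum_pow m
  have hds : ∀ k, k < m → q.derivSeries k = 0 := by
    intro k hk
    have h1k : 1 + k ≤ m := by omega
    have hq0 : q (1 + k) = 0 := by simp [hqdef, h1k]
    have hc : q.changeOriginSeries 1 k = 0 := by
      refine Finset.sum_eq_zero fun s _ => ?_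
      simp only [FormalMultilinearSeries.changeOriginSeriesTerm]
      rw [hq0]
      exact LinearIsometryEquiv.map_zero _
    show (continuousMultilinearCurryFin1 ℂ (Fin n → ℂ) ℂ :
        ((Fin n → ℂ) [×1]→L[ℂ] ℂ) →L[ℂ] (Fin n → ℂ) →L[ℂ] ℂ).compContinuousMultilinearMap
        (q.changeOriginSeries 1 k) = 0
    rw [hc]
    ext v
    simp
  have hps : ∀ y, q.derivSeries.partialSum m y = 0 := by
    intro y
    apply Finset.sum_eq_zero
    intro k hk
    rw [hds k (Finset.mem_range.mp hk)]
    simp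
  have heq : (fun y => fderiv ℂ g (0 + y) - q.derivSeries.partialSum m y) =
      fun y => fderiv ℂ g y := by
    funext y
    rw [hps y, zero_add, sub_zero]
  rw [heq] at h4
  exact h4

lemma analyticAt_eval_poly {n : ℕ} (φ : MvPolynomial (Fin n) ℂ) (z₀ : Fin n → ℂ) :
    AnalyticAt ℂ (fun z : Fin n → ℂ => MvPolynomial.eval z φ) z₀ := by
  have h := AnalyticAt.aeval_mvPolynomial (𝕜 := ℂ) (A := ℂ) (B := ℂ) (z := z₀)
    (f := fun x : Fin n → ℂ => x)
    (fun i => ((ContinuousLinearMap.proj i : ((Fin n → ℂ)) →L[ℂ] ℂ)).analyticAt z₀) φ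
  have heq : (fun x : Fin n → ℂ => (MvPolynomial.aeval x) φ)
      = fun x : Fin n → ℂ => MvPolynomial.eval x φ := by
    funext x
    rfl
  rwa [heq] at h

/-- Let `f : (ℂⁿ, 0) → (ℂ, 0)` be a holomorphic germ of multiplicity `m`
with lowest-degree homogeneous Taylor part `fm` (homogeneous of degree `m`). If
`‖z‖^m = o(‖∇f(z)‖)` as `z → 0`, then `‖z‖^m = o(‖∇fm(z)‖)` as `z → 0`; in particular
`∇fm(z) = 0` only for `z = 0`, so `fm` has an isolated singularity at the origin. -/
theorem littleO_grad_of_littleO_grad_lowest_part {n m : ℕ} (f : (Fin n → ℂ) → ℂ)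
    (hf : AnalyticAt ℂ f 0)
    (hmult : HasMultiplicity f m)
    (fm : MvPolynomial (Fin n) ℂ) (hfm : fm.IsHomogeneous m)
    (hlow : (fun z => f z - MvPolynomial.eval z fm) =O[𝓝 (0 : Fin n → ℂ)]
      fun z => ‖z‖ ^ (m + 1))
    (ho : (fun z : Fin n → ℂ => ‖z‖ ^ m) =o[𝓝 (0 : Fin n → ℂ)] fun z => ‖gradAt f z‖) :
    ((fun z : Fin n → ℂ => ‖z‖ ^ m) =o[𝓝 (0 : Fin n → ℂ)]
        fun z => ‖fun i => MvPolynomial.eval z (MvPolynomial.pderiv i fm)‖) ∧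
      ∀ z : Fin n → ℂ, (∀ i, MvPolynomial.eval z (MvPolynomial.pderiv i fm) = 0) → z = 0 := by
  classical
  have hPan : AnalyticAt ℂ (fun z : Fin n → ℂ => MvPolynomial.eval z fm) 0 :=
    analyticAt_eval_poly fm 0
  have hg : AnalyticAt ℂ (fun z => f z - MvPolynomial.eval z fm) 0 := hf.sub hPan
  have hcore := fderiv_isBigO_of_isBigO_pow hg hlow
  -- identify the gradient difference with the derivative of g
  have hgrad : ∀ᶠ z in 𝓝 (0 : Fin n → ℂ), ∀ i,
      gradAt f z i - MvPolynomial.eval z (MvPolynomial.pderiv i fm)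
        = fderiv ℂ (fun w => f w - MvPolynomial.eval w fm) z (Pi.single i 1) := by
    filter_upwards [hf.eventually_analyticAt] with z hz
    intro i
    have hdf : DifferentiableAt ℂ f z := hz.differentiableAt
    have hdP := hasFDerivAt_eval fm z
    have hsub : fderiv ℂ (fun w => f w - MvPolynomial.eval w fm) z
        = fderiv ℂ f z - polyD fm z := by
      rw [fderiv_fun_sub hdf hdP.differentiableAt, hdP.fderiv]
    rw [hsub]
    simp only [ContinuousLinearMap.sub_apply, polyD_single]
    rfl
  have hOB : (fun z => gradAt f z - (fun i => MvPolynomial.eval z (MvPolynomial.pderiv i fm)))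
      =O[𝓝 (0 : Fin n → ℂ)] fun z => ‖z‖ ^ m := by
    refine IsBigO.trans ?_ hcore
    apply IsBigO.of_bound 1
    filter_upwards [hgrad] with z hz
    rw [one_mul]
    refine (pi_norm_le_iff_of_nonneg (norm_nonneg _)).mpr fun i => ?_
    rw [Pi.sub_apply, hz i]
    calc ‖fderiv ℂ (fun w => f w - MvPolynomial.eval w fm) z (Pi.single i 1)‖
        ≤ ‖fderiv ℂ (fun w => f w - MvPolynomial.eval w fm) z‖ * ‖(Pi.single i 1 : Fin n → ℂ)‖ :=
          ContinuousLinearMap.le_opNorm _ _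
      _ ≤ ‖fderiv ℂ (fun w => f w - MvPolynomial.eval w fm) z‖ := by
          rw [Pi.norm_single]
          simp
  have hsmall : (fun z => gradAt f z - (fun i => MvPolynomial.eval z (MvPolynomial.pderiv i fm)))
      =o[𝓝 (0 : Fin n → ℂ)] fun z => gradAt f z :=
    (hOB.trans_isLittleO ho).of_norm_right
  have hb2 : ∀ᶠ z in 𝓝 (0 : Fin n → ℂ), ‖gradAt f z‖
      ≤ 2 * ‖(fun i => MvPolynomial.eval z (MvPolynomial.pderiv i fm))‖ := by
    filter_upwards [hsmall.def one_half_pos] with z hz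
    have h1 := norm_sub_norm_le (gradAt f z)
      (fun i => MvPolynomial.eval z (MvPolynomial.pderiv i fm))
    linarith
  have hABO : (fun z => ‖gradAt f z‖) =O[𝓝 (0 : Fin n → ℂ)]
      fun z => ‖(fun i => MvPolynomial.eval z (MvPolynomial.pderiv i fm))‖ := by
    apply IsBigO.of_bound 2
    filter_upwards [hb2] with z hz
    simpa using hz
  have goal1 := ho.trans_isBigO hABO
  refine ⟨goal1, ?_⟩
  intro z hz
  by_contra hz0
  have hbnd := goal1.def one_pos
  rw [Metric.eventually_nhds_iff] at hbnd
  obtain ⟨ε, hε, hball⟩ := hbnd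
  rcases m with _ | d
  · -- m = 0: all partial derivatives of fm vanish identically
    have hfm0 : ∀ i, MvPolynomial.pderiv i fm = 0 := by
      intro i
      have hdeg0 := (MvPolynomial.totalDegree_zero_iff_isHomogeneous _).mpr hfm
      rw [MvPolynomial.totalDegree_eq_zero_iff] at hdeg0
      conv_lhs => rw [← MvPolynomial.support_sum_monomial_coeff fm]
      rw [map_sum]
      refine Finset.sum_eq_zero fun u hu => ?_
      rw [MvPolynomial.pderiv_monomial, hdeg0 u hu i]
      simp
    have h0 := hball (show dist (0 : Fin n → ℂ) 0 < ε by simpa using hε)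
    simp [hfm0] at h0
    rw [show ((fun _ : Fin n => (0:ℂ))) = (0 : Fin n → ℂ) from rfl, norm_zero] at h0
    linarith
  · -- m = d + 1
    have hzpos : (0:ℝ) < ‖z‖ := norm_pos_iff.mpr hz0
    set c : ℝ := ε / (2 * ‖z‖) with hc
    have hcpos : 0 < c := by positivity
    set w : Fin n → ℂ := (c : ℂ) • z with hw
    have hwnorm : ‖w‖ = c * ‖z‖ := by
      rw [hw, norm_smul]
      simp [abs_of_pos hcpos]
    have hwlt : dist w 0 < ε := by
      rw [dist_zero_right, hwnorm, hc]
      rw [div_mul_eq_mul_div, mul_comm]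
      rw [div_lt_iff₀ (by positivity)]
      nlinarith
    have hBw : ∀ i, MvPolynomial.eval w (MvPolynomial.pderiv i fm) = 0 := by
      intro i
      rw [hw, eval_smul_hom (isHomogeneous_pderiv hfm i), hz i, mul_zero]
    have hb : ‖w‖ ^ (d + 1) ≤
        ‖(fun i => MvPolynomial.eval w (MvPolynomial.pderiv i fm) : Fin n → ℂ)‖ := by
      have := hball hwlt
      simpa using this
    have hB0 : ((fun i => MvPolynomial.eval w (MvPolynomial.pderiv i fm)) : Fin n → ℂ)
        = (0 : Fin n → ℂ) := by
      funext i; exact hBw i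
    rw [hB0, norm_zero] at hb
    have hwz : ‖w‖ = 0 :=
      pow_eq_zero_iff (n := d + 1) (by omega) |>.mp
        (le_antisymm hb (by positivity))
    rw [hwnorm] at hwz
    nlinarith
end

section
/- Let h be a homogeneous polynomial of degree m ≥ 2 in n complex variables z₁, …, zₙ with an isolated singularity at the origin (∇h(z) = 0 only for z = 0). Then for every index k ∈ {1, …, n} there exists an index j ∈ {1, …, n} such that the coefficient of the monomial z_k^{m−1} z_j in h is nonzero (the case j = k giving the monomial z_k^m). -/
set_option maxHeartbeats 1000000
set_option synthInstance.maxHeartbeats 400000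

open Filter Topology Asymptotics

/-- Let `h` be a homogeneous polynomial of degree `m ≥ 2` in `n` complex
variables with an isolated singularity at the origin (`∇h(z) = 0` only for `z = 0`). Then
for every index `k` there is an index `j` such that the coefficient of `z_k^{m-1} z_j` in
`h` is nonzero (the case `j = k` giving the monomial `z_k^m`). -/
theorem exists_monomial_of_isolated_singularity {n m : ℕ} (hm : 2 ≤ m)
    (h : MvPolynomial (Fin n) ℂ) (hh : h.IsHomogeneous m)
    (hiso : ∀ z : Fin n → ℂ, (∀ i, MvPolynomial.eval z (MvPolynomial.pderiv i h) = 0) → z = 0) :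
    ∀ k : Fin n, ∃ j : Fin n,
      MvPolynomial.coeff (Finsupp.single k (m - 1) + Finsupp.single j 1) h ≠ 0 := by
  intro k
  by_contra hc
  push_neg at hc
  have key : ∀ i : Fin n,
      MvPolynomial.eval (Pi.single k 1 : Fin n → ℂ) (MvPolynomial.pderiv i h) = 0 := by
    intro i
    conv_lhs => rw [h.as_sum]
    rw [map_sum, map_sum]
    apply Finset.sum_eq_zero
    intro d hd
    rw [MvPolynomial.pderiv_monomial, MvPolynomial.eval_monomial]
    by_cases hdi : d i = 0
    · simp [hdi]
    by_cases hsupp : (d - Finsupp.single i 1).support ⊆ {k}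
    · exfalso
      set e := d - Finsupp.single i 1 with he
      have hadd : e + Finsupp.single i 1 = d := by
        ext j
        rcases eq_or_ne j i with rfl | hji
        · simp [he, Finsupp.tsub_apply, Nat.sub_add_cancel (Nat.one_le_iff_ne_zero.mpr hdi)]
        · simp [he, Finsupp.tsub_apply, Finsupp.single_eq_of_ne' (Ne.symm hji)]
      have hek : e = Finsupp.single k (e k) := by
        ext j
        rcases eq_or_ne j k with rfl | hjk
        · simp
        · rw [Finsupp.single_eq_of_ne' (Ne.symm hjk)]
          by_contra hj
          exact hjk (Finset.mem_singleton.mp (hsupp (Finsupp.mem_support_iff.mpr hj)))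
      have hdeg : Finsupp.weight 1 d = m := hh (MvPolynomial.mem_support_iff.mp hd)
      have hdm : e k + 1 = m := by
        rw [← hadd, map_add, hek] at hdeg
        simpa [Finsupp.weight_apply, Finsupp.sum_single_index] using hdeg
      have hd' : d = Finsupp.single k (m - 1) + Finsupp.single i 1 := by
        rw [← hadd, hek]
        have : e k = m - 1 := by omega
        rw [this]
      exact (MvPolynomial.mem_support_iff.mp hd) (hd' ▸ hc i)
    · obtain ⟨j, hjmem, hjk⟩ : ∃ j ∈ (d - Finsupp.single i 1).support, j ≠ k := by
        by_contra hcon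
        push_neg at hcon
        exact hsupp fun j hj => Finset.mem_singleton.mpr (hcon j hj)
      have hzero : Finsupp.prod (d - Finsupp.single i 1)
          (fun a e => (Pi.single k 1 : Fin n → ℂ) a ^ e) = 0 := by
        apply Finset.prod_eq_zero hjmem
        simp only [Pi.single_eq_of_ne hjk]
        exact zero_pow (Finsupp.mem_support_iff.mp hjmem)
      rw [hzero, mul_zero]
  have := congrFun (hiso _ key) k
  simp at this
end
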